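/- Let r ≥ 2 be an integer, let λ > 0, let ε > 0, set b_c = (1 - 1/r)·((r-1)!/λ)^{1/(r-1)}, and suppose a ≥ (1+ε)·b_c. Define x_0 = a, x_{t+1} = λ·x_t^r/r! + a, and Δ(t) = x_{t+1} - x_t. Then there exists t_2 = t_2(r,ε), depending only on r and ε (and not on λ or a), such that Δ(t+1) > 2·Δ(t) for all t ≥ t_2; in particular Δ(t) grows at least geometrically from time t_2 on. -/

import Mathlib

open Filter

/-- The critical value `b_c = (1 - 1/r) · ((r-1)!/λ)^(1/(r-1))` for the one-step
infection recursion `f(x) = λ x^r / r! + a` of bootstrap percolation. -/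
noncomputable def bcrit (r : ℕ) (lam : ℝ) : ℝ :=
  (1 - 1 / (r : ℝ)) * (((r - 1).factorial : ℝ) / lam) ^ ((1 : ℝ) / ((r : ℝ) - 1))

/-- Convexity bound: `b^(n+1) - s^(n+1) ≥ (n+1) s^n (b - s)` for `0 ≤ s ≤ b`. -/
lemma aux_pow_sub_pow (n : ℕ) (s b : ℝ) (hs : 0 ≤ s) (hsb : s ≤ b) :
    ((n : ℝ) + 1) * s ^ n * (b - s) ≤ b ^ (n + 1) - s ^ (n + 1) := by
  induction n with
  | zero => simp
  | succ n ih =>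
    have hb : 0 ≤ b := hs.trans hsb
    have hbs : 0 ≤ b - s := sub_nonneg.mpr hsb
    have hsn : 0 ≤ s ^ n := pow_nonneg hs n
    have hnn : (0:ℝ) ≤ ((n : ℝ) + 1) * s ^ n * (b - s) := by
      apply mul_nonneg (mul_nonneg (by positivity) hsn) hbs
    have h2 : s * (((n : ℝ) + 1) * s ^ n * (b - s)) ≤ b * (b ^ (n + 1) - s ^ (n + 1)) :=
      le_trans (mul_le_mul_of_nonneg_right hsb hnn |>.trans_eq (by ring))
        (mul_le_mul_of_nonneg_left ih hb)
    have egoal : b ^ (n + 1 + 1) - s ^ (n + 1 + 1)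
        = b * (b ^ (n + 1) - s ^ (n + 1)) + (b - s) * (s ^ n * s) := by
      rw [pow_succ b (n + 1), pow_succ s (n + 1), pow_succ s n]; ring
    have elhs : s ^ (n + 1) = s ^ n * s := pow_succ s n
    rw [elhs] at h2
    rw [egoal, elhs]
    push_cast
    linarith [h2, mul_nonneg (mul_nonneg hsn hs) hbs]

/-- Bernoulli consequence: `c + c·r·v ≤ c·v^r + c·r` for `c, v ≥ 0`. -/
lemma aux_bern (r : ℕ) (c v : ℝ) (hc : 0 ≤ c) (hv : 0 ≤ v) :
    c + c * (r : ℝ) * v ≤ c * v ^ r + c * (r : ℝ) := by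
  have hb := one_add_mul_le_pow (show (-2:ℝ) ≤ v - 1 by linarith) r
  have hb' : 1 + (r : ℝ) * (v - 1) ≤ v ^ r := by simpa using hb
  nlinarith [mul_le_mul_of_nonneg_left hb' hc]

theorem infection_recursion_supercritical_doubling
    (r : ℕ) (hr : 2 ≤ r) (ε : ℝ) (hε : 0 < ε) :
    ∃ t₂ : ℕ, ∀ lam a : ℝ, 0 < lam → (1 + ε) * bcrit r lam ≤ a →
      ∀ x : ℕ → ℝ, x 0 = a →
        (∀ t, x (t + 1) = lam * (x t) ^ r / (r.factorial : ℝ) + a) →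
        ∀ t, t₂ ≤ t → 2 * (x (t + 1) - x t) < x (t + 2) - x (t + 1) := by
  refine ⟨⌈4 / ε⌉₊, ?_⟩
  intro lam a hlam ha x hx0 hrec
  rw [bcrit] at ha
  have hr2 : (2:ℝ) ≤ (r:ℝ) := by exact_mod_cast hr
  have hr0 : (0:ℝ) < (r:ℝ) := by linarith
  have hrne : ((r:ℝ) - 1) ≠ 0 := by linarith
  set c : ℝ := (((r - 1).factorial : ℝ) / lam) ^ ((1 : ℝ) / ((r : ℝ) - 1)) with hcdef
  have hKpos : (0:ℝ) < ((r - 1).factorial : ℝ) / lam := by positivity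
  have hc : 0 < c := Real.rpow_pos_of_pos hKpos _
  have hr1 : ((r - 1 : ℕ) : ℝ) = (r : ℝ) - 1 := by
    have h1 : (1:ℕ) ≤ r := by omega
    push_cast [h1]
    ring
  -- c ^ (r-1) = (r-1)!/λ
  have hcr : c ^ (r - 1) = ((r - 1).factorial : ℝ) / lam := by
    rw [hcdef, ← Real.rpow_natCast ((((r - 1).factorial : ℝ) / lam) ^ ((1 : ℝ) / ((r : ℝ) - 1))) (r-1),
        ← Real.rpow_mul hKpos.le, hr1, one_div, inv_mul_cancel₀ hrne, Real.rpow_one]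
  have hlamc : lam * c ^ (r - 1) = ((r - 1).factorial : ℝ) := by
    rw [hcr]; field_simp
  have hfac : (r.factorial : ℝ) = (r : ℝ) * ((r - 1).factorial : ℝ) := by
    have h : r.factorial = r * (r - 1).factorial := by
      conv_lhs => rw [show r = (r - 1) + 1 by omega]
      rw [Nat.factorial_succ]
      congr 1
      omega
    exact_mod_cast h
  have hfacpos : (0:ℝ) < (r.factorial : ℝ) := by
    exact_mod_cast r.factorial_pos
  -- a ≥ (1+ε)(r-1)c / r  (cleared of division)
  have ha' : (1 + ε) * ((r:ℝ) - 1) * c ≤ (r:ℝ) * a := by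
    have h := mul_le_mul_of_nonneg_left ha hr0.le
    calc (1 + ε) * ((r:ℝ) - 1) * c
        = (r:ℝ) * ((1 + ε) * (((1:ℝ) - 1 / (r:ℝ)) * c)) := by field_simp
      _ ≤ (r:ℝ) * a := h
  have ha0 : 0 < a := by
    have h12 : (1:ℝ) ≤ (r:ℝ) - 1 := by linarith
    nlinarith [mul_pos (mul_pos (show (0:ℝ) < 1 + ε by linarith)
      (show (0:ℝ) < (r:ℝ) - 1 by linarith)) hc]
  -- each step increases x by at least ε c / 2
  have hstep : ∀ u : ℝ, 0 ≤ u → ε * c / 2 + u ≤ lam * u ^ r / (r.factorial : ℝ) + a := by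
    intro u hu
    set v : ℝ := u / c with hvdef
    have hv0 : 0 ≤ v := by positivity
    have huv : u = c * v := by rw [hvdef]; field_simp
    have h2 : lam * u ^ r / (r.factorial : ℝ) = c * v ^ r / (r:ℝ) := by
      have hcru : c ^ r = c * c ^ (r - 1) := by
        conv_lhs => rw [show r = 1 + (r - 1) by omega]
        rw [pow_add, pow_one]
      rw [huv, mul_pow, hfac, hcru]
      rw [← hlamc]
      field_simp
    rw [h2, show c * v ^ r / (r:ℝ) + a = (c * v ^ r + (r:ℝ) * a) / (r:ℝ) by field_simp,
        le_div_iff₀ hr0]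
    have hbern := aux_bern r c v hc.le hv0
    have hint : (0:ℝ) ≤ ε * c * ((r:ℝ) / 2 - 1) := by
      apply mul_nonneg (mul_nonneg hε.le hc.le)
      linarith
    rw [huv]
    nlinarith [hbern, ha', hint]
  -- lower bound on x t
  have hlow : ∀ t : ℕ, a + (t : ℝ) * (ε * c / 2) ≤ x t := by
    intro t
    induction t with
    | zero => simp [hx0]
    | succ t ih =>
      have hxt0 : (0:ℝ) ≤ x t := by
        have : (0:ℝ) ≤ (t:ℝ) * (ε * c / 2) := by positivity
        linarith
      have h := hstep (x t) hxt0
      rw [hrec t]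
      push_cast
      linarith
  -- main estimate
  intro t ht
  have hxt0 : (0:ℝ) ≤ x t := by
    have := hlow t
    have : (0:ℝ) ≤ (t:ℝ) * (ε * c / 2) := by positivity
    linarith [hlow t]
  have hd : ε * c / 2 ≤ x (t + 1) - x t := by
    have h := hstep (x t) hxt0
    rw [hrec t]
    linarith
  have hdpos : 0 < x (t + 1) - x t := by nlinarith
  have hx01 : x t ≤ x (t + 1) := by linarith
  -- x t > 2c
  have hx2c : 2 * c < x t := by
    have hceil : 4 / ε ≤ (⌈4 / ε⌉₊ : ℝ) := Nat.le_ceil _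
    have hct : (⌈4 / ε⌉₊ : ℝ) ≤ (t : ℝ) := by exact_mod_cast ht
    have h1 : 4 / ε * (ε * c / 2) ≤ (t : ℝ) * (ε * c / 2) := by
      apply mul_le_mul_of_nonneg_right (by linarith) (by positivity)
    have h2 : 4 / ε * (ε * c / 2) = 2 * c := by field_simp; ring
    have := hlow t
    linarith
  -- convexity bound
  have h5 : (r:ℝ) * (x t) ^ (r - 1) * (x (t + 1) - x t) ≤ (x (t + 1)) ^ r - (x t) ^ r := by
    have h := aux_pow_sub_pow (r - 1) (x t) (x (t + 1)) hxt0 hx01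
    rw [show (r - 1) + 1 = r by omega, hr1] at h
    calc (r:ℝ) * (x t) ^ (r - 1) * (x (t + 1) - x t)
        = ((r:ℝ) - 1 + 1) * (x t) ^ (r - 1) * (x (t + 1) - x t) := by ring
      _ ≤ _ := h
  have hcpow : (0:ℝ) < c ^ (r - 1) := pow_pos hc _
  -- (x t)^(r-1) > 2 c^(r-1)
  have h6 : (2 * c) ^ (r - 1) < (x t) ^ (r - 1) :=
    pow_lt_pow_left₀ hx2c (by positivity) (by omega)
  have h7 : 2 * c ^ (r - 1) ≤ (2 * c) ^ (r - 1) := by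
    rw [mul_pow]
    have h21 : (2:ℝ) = 2 ^ 1 := by norm_num
    have : (2:ℝ) ≤ 2 ^ (r - 1) := by
      calc (2:ℝ) = 2 ^ 1 := by norm_num
        _ ≤ 2 ^ (r - 1) := pow_le_pow_right₀ (by norm_num) (by omega)
    exact mul_le_mul_of_nonneg_right this hcpow.le
  -- identity for the increment
  have hD : x (t + 2) - x (t + 1) = lam * ((x (t + 1)) ^ r - (x t) ^ r) / (r.factorial : ℝ) := by
    have h1 := hrec (t + 1)
    have h2 := hrec t
    rw [show t + 2 = (t + 1) + 1 by ring] at *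
    rw [h1, h2]
    ring
  have hlr : lam * (r:ℝ) / (r.factorial : ℝ) = 1 / c ^ (r - 1) := by
    rw [hfac, ← hlamc]
    field_simp
  have key2 : (x t) ^ (r - 1) * (x (t + 1) - x t) / c ^ (r - 1)
      ≤ lam * ((x (t + 1)) ^ r - (x t) ^ r) / (r.factorial : ℝ) := by
    have h8 : lam / (r.factorial : ℝ) * ((r:ℝ) * (x t) ^ (r - 1) * (x (t + 1) - x t))
        ≤ lam / (r.factorial : ℝ) * ((x (t + 1)) ^ r - (x t) ^ r) :=
      mul_le_mul_of_nonneg_left h5 (by positivity)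
    calc (x t) ^ (r - 1) * (x (t + 1) - x t) / c ^ (r - 1)
        = lam * (r:ℝ) / (r.factorial : ℝ) * ((x t) ^ (r - 1) * (x (t + 1) - x t)) := by
          rw [hlr]; ring
      _ = lam / (r.factorial : ℝ) * ((r:ℝ) * (x t) ^ (r - 1) * (x (t + 1) - x t)) := by ring
      _ ≤ lam / (r.factorial : ℝ) * ((x (t + 1)) ^ r - (x t) ^ r) := h8
      _ = lam * ((x (t + 1)) ^ r - (x t) ^ r) / (r.factorial : ℝ) := by ring
  have key1 : 2 * c ^ (r - 1) * (x (t + 1) - x t) < (x t) ^ (r - 1) * (x (t + 1) - x t) :=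
    mul_lt_mul_of_pos_right (lt_of_le_of_lt h7 h6) hdpos
  have key1' : 2 * (x (t + 1) - x t) < (x t) ^ (r - 1) * (x (t + 1) - x t) / c ^ (r - 1) := by
    rw [lt_div_iff₀ hcpow]
    calc 2 * (x (t + 1) - x t) * c ^ (r - 1)
        = 2 * c ^ (r - 1) * (x (t + 1) - x t) := by ring
      _ < (x t) ^ (r - 1) * (x (t + 1) - x t) := key1
  rw [hD]
  exact lt_of_lt_of_le key1' key2
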